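/- Let U and V be real Banach spaces, T : U → V a bounded linear operator, and W ⊆ U a closed subspace such that T maps W onto V and ‖T x‖ ≥ C ‖x‖ for all x ∈ W, for some constant C > 0. Let N : U → V be a map with N(0) = 0 satisfying the quadratic estimate ‖N(x) − N(y)‖ ≤ M (‖x‖ + ‖y‖) ‖x − y‖ for all x, y ∈ U, for some constant M > 0. Then for every e ∈ V with ‖e‖ ≤ C²/(10 M) there exists u ∈ W with T u + N(u) = e and ‖u‖ ≤ 2 C⁻¹ ‖e‖; moreover u is the unique solution of T u + N(u) = e among elements u ∈ W with ‖u‖ < C/(2M). -/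

import Mathlib

/-- (Main estimate + implicit function theorem.) Let `T : U → V` be a
bounded linear operator between real Banach spaces, `W ⊆ U` a closed subspace mapped
onto `V` by `T` with `‖T x‖ ≥ C ‖x‖` on `W` (`C > 0`), and let `N : U → V` satisfy
`N 0 = 0` and the quadratic estimate with constant `M > 0`. Then for every `e` with
`‖e‖ ≤ C²/(10 M)` there is `u ∈ W` with `T u + N u = e` and `‖u‖ ≤ 2 C⁻¹ ‖e‖`, and `u`
is the unique such solution in `W` with norm `< C/(2M)`. -/
theorem main_estimate_ift
    {U V : Type*} [NormedAddCommGroup U] [NormedSpace ℝ U] [CompleteSpace U]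
    [NormedAddCommGroup V] [NormedSpace ℝ V] [CompleteSpace V]
    (T : U →L[ℝ] V)
    (W : Submodule ℝ U) (hWclosed : IsClosed (W : Set U))
    (hsurj : ∀ v : V, ∃ x ∈ W, T x = v)
    (C : ℝ) (hC : 0 < C)
    (hbound : ∀ x ∈ W, C * ‖x‖ ≤ ‖T x‖)
    (N : U → V) (hN0 : N 0 = 0)
    (M : ℝ) (hM : 0 < M)
    (hquad : ∀ x y : U, ‖N x - N y‖ ≤ M * (‖x‖ + ‖y‖) * ‖x - y‖) :
    ∀ e : V, ‖e‖ ≤ C ^ 2 / (10 * M) →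
      ∃ u ∈ W, T u + N u = e ∧ ‖u‖ ≤ 2 * C⁻¹ * ‖e‖ ∧
        ∀ u' ∈ W, ‖u'‖ < C / (2 * M) → T u' + N u' = e → u' = u := by
  intro e he
  classical
  have hC' : (0:ℝ) < C⁻¹ := inv_pos.2 hC
  have he0 : (0:ℝ) ≤ ‖e‖ := norm_nonneg e
  have hCC : C * C⁻¹ = 1 := mul_inv_cancel₀ hC.ne'
  choose S hSW hST using hsurj
  set r : ℝ := 2 * C⁻¹ * ‖e‖ with hrdef
  have hr0 : 0 ≤ r := by positivity
  have hinv : ∀ x ∈ W, ‖x‖ ≤ C⁻¹ * ‖T x‖ := by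
    intro x hx
    rw [← mul_le_mul_iff_right₀ hC, ← mul_assoc, hCC, one_mul]
    exact hbound x hx
  have hNnorm : ∀ u : U, ‖N u‖ ≤ M * (‖u‖ * ‖u‖) := by
    intro u
    have := hquad u 0
    simpa [hN0, mul_assoc] using this
  -- key numeric estimates
  have heC : ‖e‖ * (10 * M) ≤ C ^ 2 := by
    rw [← le_div_iff₀ (by positivity)]; exact he
  have hcc2 : C ^ 2 * (C⁻¹ * C⁻¹) = 1 := by
    field_simp
  have key2 : 10 * (M * (‖e‖ * (C⁻¹ * C⁻¹))) ≤ 1 := by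
    calc 10 * (M * (‖e‖ * (C⁻¹ * C⁻¹))) = ‖e‖ * (10 * M) * (C⁻¹ * C⁻¹) := by ring
      _ ≤ C ^ 2 * (C⁻¹ * C⁻¹) := mul_le_mul_of_nonneg_right heC (by positivity)
      _ = 1 := hcc2
  have key' : 10 * (M * (‖e‖ * ‖e‖ * (C⁻¹ * C⁻¹))) ≤ ‖e‖ := by
    calc 10 * (M * (‖e‖ * ‖e‖ * (C⁻¹ * C⁻¹)))
        = 10 * (M * (‖e‖ * (C⁻¹ * C⁻¹))) * ‖e‖ := by ring
      _ ≤ 1 * ‖e‖ := mul_le_mul_of_nonneg_right key2 he0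
      _ = ‖e‖ := one_mul _
  have hMr : M * (r * r) ≤ 2/5 * ‖e‖ := by
    have h1 : M * (r * r) = (10 * (M * (‖e‖ * ‖e‖ * (C⁻¹ * C⁻¹)))) * (2/5) := by
      rw [hrdef]; ring
    rw [h1]; linarith
  have h25 : C⁻¹ * (M * (2 * r)) ≤ 2/5 := by
    have h1 : C⁻¹ * (M * (2 * r)) = 4 * (M * (‖e‖ * (C⁻¹ * C⁻¹))) := by
      rw [hrdef]; ring
    rw [h1]; linarith
  -- the closed set K
  set K : Set U := {u : U | u ∈ W ∧ ‖u‖ ≤ r} with hKdef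
  have hKclosed : IsClosed K := by
    have : K = (W : Set U) ∩ Metric.closedBall 0 r := by
      ext u; simp [hKdef, Metric.mem_closedBall, dist_zero_right]
    rw [this]
    exact hWclosed.inter Metric.isClosed_closedBall
  haveI : CompleteSpace K := hKclosed.completeSpace_coe
  haveI : Nonempty K := ⟨⟨0, W.zero_mem, by simpa using hr0⟩⟩
  -- the iteration map
  have hfb : ∀ u : U, u ∈ K → S (e - N u) ∈ K := by
    rintro u ⟨huW, hur⟩
    refine ⟨hSW _, ?_⟩
    have h1 : ‖S (e - N u)‖ ≤ C⁻¹ * ‖e - N u‖ := by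
      have := hinv _ (hSW (e - N u))
      rwa [hST] at this
    have h2 : ‖e - N u‖ ≤ ‖e‖ + M * (‖u‖ * ‖u‖) :=
      (norm_sub_le _ _).trans (by gcongr; exact hNnorm u)
    have h3 : M * (‖u‖ * ‖u‖) ≤ M * (r * r) :=
      mul_le_mul_of_nonneg_left (mul_le_mul hur hur (norm_nonneg u) hr0) hM.le
    calc ‖S (e - N u)‖ ≤ C⁻¹ * (‖e‖ + M * (r * r)) := by
          refine h1.trans ?_; gcongr; linarith
      _ ≤ C⁻¹ * (2 * ‖e‖) := by gcongr; linarith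
      _ = r := by rw [hrdef]; ring
  set f : K → K := fun u => ⟨S (e - N u.1), hfb _ u.2⟩ with hfdef
  have hSdiff : ∀ v v' : V, ‖S v - S v'‖ ≤ C⁻¹ * ‖v - v'‖ := by
    intro v v'
    have hmem : S v - S v' ∈ W := W.sub_mem (hSW v) (hSW v')
    have := hinv _ hmem
    rwa [map_sub, hST, hST] at this
  have hcontr : ContractingWith (2/5 : NNReal) f := by
    constructor
    · rw [← NNReal.coe_lt_one]; norm_num
    · apply LipschitzWith.of_dist_le_mul
      intro u v
      rw [Subtype.dist_eq, Subtype.dist_eq, dist_eq_norm, dist_eq_norm]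
      have hcoe : ((2/5 : NNReal) : ℝ) = 2/5 := by norm_num
      rw [hcoe]
      have h1 : ‖(f u).1 - (f v).1‖ ≤ C⁻¹ * ‖(e - N u.1) - (e - N v.1)‖ := hSdiff _ _
      have h2 : (e - N u.1) - (e - N v.1) = N v.1 - N u.1 := by abel
      have h3 : ‖N v.1 - N u.1‖ ≤ M * (‖v.1‖ + ‖u.1‖) * ‖v.1 - u.1‖ := hquad _ _
      have h4 : M * (‖v.1‖ + ‖u.1‖) * ‖v.1 - u.1‖ ≤ M * (2 * r) * ‖u.1 - v.1‖ := by
        rw [norm_sub_rev v.1 u.1]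
        apply mul_le_mul_of_nonneg_right _ (norm_nonneg _)
        have h5 := u.2.2
        have h6 := v.2.2
        nlinarith [hM.le]
      have h5 : ‖(f u).1 - (f v).1‖ ≤ C⁻¹ * (M * (2 * r)) * ‖u.1 - v.1‖ := by
        rw [h2] at h1
        calc ‖(f u).1 - (f v).1‖ ≤ C⁻¹ * (M * (2 * r) * ‖u.1 - v.1‖) := by
              refine h1.trans ?_; gcongr; exact h3.trans h4
          _ = C⁻¹ * (M * (2 * r)) * ‖u.1 - v.1‖ := by ring
      exact h5.trans (mul_le_mul_of_nonneg_right h25 (norm_nonneg _))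
  set u₀ : K := hcontr.fixedPoint f with hu0
  have hfix : f u₀ = u₀ := hcontr.fixedPoint_isFixedPt
  have hfix' : S (e - N u₀.1) = u₀.1 := congrArg Subtype.val hfix
  have hTu : T u₀.1 = e - N u₀.1 := by
    have h := hST (e - N u₀.1)
    rw [hfix'] at h
    exact h
  refine ⟨u₀.1, u₀.2.1, by rw [hTu]; abel, u₀.2.2, ?_⟩
  -- uniqueness
  intro u' hu'W hu'norm hu'eq
  have hdiff : T (u' - u₀.1) = N u₀.1 - N u' := by
    rw [map_sub]
    have h2 : T u' = e - N u' := eq_sub_of_add_eq hu'eq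
    rw [h2, hTu]; abel
  have hle : C * ‖u' - u₀.1‖ ≤ M * (‖u₀.1‖ + ‖u'‖) * ‖u' - u₀.1‖ := by
    have h1 := hbound _ (W.sub_mem hu'W u₀.2.1)
    rw [hdiff] at h1
    have h2 := hquad u₀.1 u'
    rw [norm_sub_rev u₀.1 u'] at h2
    exact h1.trans h2
  have hMrC : M * r ≤ C / 5 := by
    have h := mul_le_mul_of_nonneg_left h25 hC.le
    rw [← mul_assoc, hCC, one_mul] at h
    linarith
  have hMu0 : M * ‖u₀.1‖ ≤ C / 5 :=
    le_trans (mul_le_mul_of_nonneg_left u₀.2.2 hM.le) hMrC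
  have hMu' : M * ‖u'‖ < C / 2 := by
    have h := mul_lt_mul_of_pos_left hu'norm hM
    have h2 : M * (C / (2 * M)) = C / 2 := by field_simp
    linarith
  have hsum : M * (‖u₀.1‖ + ‖u'‖) < C := by
    have hh : M * (‖u₀.1‖ + ‖u'‖) = M * ‖u₀.1‖ + M * ‖u'‖ := by ring
    linarith
  have hz : ‖u' - u₀.1‖ = 0 := by
    by_contra h
    have hpos : 0 < ‖u' - u₀.1‖ := lt_of_le_of_ne (norm_nonneg _) (Ne.symm h)
    nlinarith
  exact sub_eq_zero.mp (norm_eq_zero.mp hz)
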